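/- For r ≥ 2, max_j { q_j + (1/(r−1)) ∑ᵢ ‖(qᵢρᵢ − q_jρ_j)⁺‖₁ } ≥ (1/r)·(1 + (1/(r−1))·∑_{1≤i<j≤r} ‖qᵢρᵢ − q_jρ_j‖₁); i.e., the first new lower bound dominates the second. -/

import Mathlib

open scoped ComplexOrder

/-- The operator absolute value `√(AᴴA)` of a matrix. -/
noncomputable def matAbs {n : ℕ} (A : Matrix (Fin n) (Fin n) ℂ) : Matrix (Fin n) (Fin n) ℂ :=
  (Matrix.posSemidef_conjTranspose_mul_self A).1.eigenvectorUnitary.1 *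
    Matrix.diagonal ((↑) ∘ (√·) ∘ (Matrix.posSemidef_conjTranspose_mul_self A).1.eigenvalues) *
    (star (Matrix.posSemidef_conjTranspose_mul_self A).1.eigenvectorUnitary : Matrix (Fin n) (Fin n) ℂ)

/-- The trace norm `‖A‖₁ = tr √(AᴴA)`. -/
noncomputable def traceNorm {n : ℕ} (A : Matrix (Fin n) (Fin n) ℂ) : ℝ :=
  ((matAbs A).trace).re

/-- The positive part `A⁺ = (|A| + A)/2` of a self-adjoint matrix `A`, so that
`A = A⁺ - A⁻` with `A⁺, A⁻ ≥ 0`. -/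
noncomputable def matPosPart {n : ℕ} (A : Matrix (Fin n) (Fin n) ℂ) : Matrix (Fin n) (Fin n) ℂ :=
  (2 : ℂ)⁻¹ • (matAbs A + A)

/-- A density operator: positive semidefinite with unit trace. -/
def IsDensity {n : ℕ} (ρ : Matrix (Fin n) (Fin n) ℂ) : Prop :=
  ρ.PosSemidef ∧ ρ.trace = 1

/-- A POVM with `r` outcomes: positive semidefinite effects summing to the identity. -/
def IsPOVM {n r : ℕ} (M : Fin r → Matrix (Fin n) (Fin n) ℂ) : Prop :=
  (∀ i, (M i).PosSemidef) ∧ ∑ i, M i = 1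

/-- Success probability `∑ i, q i * tr (ρ i * M i)` of a measurement. -/
noncomputable def successProb {n r : ℕ} (q : Fin r → ℝ)
    (ρ M : Fin r → Matrix (Fin n) (Fin n) ℂ) : ℝ :=
  ∑ i, q i * ((ρ i * M i).trace).re

/-- Optimal success probability under minimum-error discrimination. -/
noncomputable def optSuccess {n r : ℕ} (q : Fin r → ℝ)
    (ρ : Fin r → Matrix (Fin n) (Fin n) ℂ) : ℝ :=
  sSup {p | ∃ M, IsPOVM M ∧ p = successProb q ρ M}

open scoped MatrixOrder in
lemma matAbs_eq_sqrt {n : ℕ} (A : Matrix (Fin n) (Fin n) ℂ) :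
    matAbs A = CFC.sqrt (A.conjTranspose * A) := by
  have hA := Matrix.posSemidef_conjTranspose_mul_self A
  rw [CFC.sqrt_eq_cfc, cfc_nnreal_eq_real _ _ hA.nonneg, hA.1.cfc_eq, matAbs]
  simp only [Matrix.IsHermitian.cfc, Unitary.conjStarAlgAut_apply]
  congr 3
  funext i
  simp [Real.coe_toNNReal', max_eq_left (hA.eigenvalues_nonneg i)]

open scoped MatrixOrder in
lemma psd_eq_matAbs_of_sq_eq {n : ℕ} {A P : Matrix (Fin n) (Fin n) ℂ} (hP : P.PosSemidef)
    (_hQ : (A.conjTranspose * A).PosSemidef) (h : P ^ 2 = A.conjTranspose * A) :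
    P = matAbs A := by
  rw [matAbs_eq_sqrt]
  exact (CFC.sqrt_unique (by rw [← h, pow_two]) hP.nonneg).symm

lemma matAbs_eq_self {n : ℕ} {P : Matrix (Fin n) (Fin n) ℂ} (hP : P.PosSemidef) :
    matAbs P = P :=
  (psd_eq_matAbs_of_sq_eq hP (Matrix.posSemidef_conjTranspose_mul_self P)
    (by rw [pow_two, hP.1.eq])).symm

lemma traceNorm_psd {n : ℕ} {P : Matrix (Fin n) (Fin n) ℂ} (hP : P.PosSemidef) :
    traceNorm P = P.trace.re := by
  rw [traceNorm, matAbs_eq_self hP]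

lemma matAbs_neg {n : ℕ} (X : Matrix (Fin n) (Fin n) ℂ) : matAbs (-X) = matAbs X := by
  rw [matAbs_eq_sqrt, matAbs_eq_sqrt]
  simp

lemma psd_smul_half {n : ℕ} {A : Matrix (Fin n) (Fin n) ℂ} (hA : A.PosSemidef) :
    ((2 : ℂ)⁻¹ • A).PosSemidef := by
  exact hA.smul (by norm_num [Complex.le_def])

lemma matAbs_spectral {n : ℕ} {X : Matrix (Fin n) (Fin n) ℂ} (hX : X.IsHermitian) :
    matAbs X = (hX.eigenvectorUnitary : Matrix (Fin n) (Fin n) ℂ) *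
      Matrix.diagonal ((RCLike.ofReal : ℝ → ℂ) ∘ fun i => |hX.eigenvalues i|) *
      (star hX.eigenvectorUnitary : Matrix (Fin n) (Fin n) ℂ) := by
  set U := (hX.eigenvectorUnitary : Matrix (Fin n) (Fin n) ℂ) with hUdef
  have hU : star U * U = 1 := (Matrix.mem_unitaryGroup_iff').mp hX.eigenvectorUnitary.2
  have key : ∀ A B : Matrix (Fin n) (Fin n) ℂ,
      (U * A * star U) * (U * B * star U) = U * (A * B) * star U := by
    intro A B
    simp only [Matrix.mul_assoc]
    rw [← Matrix.mul_assoc (star U) U, hU, Matrix.one_mul]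
  set D := Matrix.diagonal ((RCLike.ofReal : ℝ → ℂ) ∘ fun i => |hX.eigenvalues i|) with hDdef
  have hS : (U * D * star U).PosSemidef := by
    refine Matrix.PosSemidef.mul_mul_conjTranspose_same ?_ U
    refine Matrix.posSemidef_diagonal_iff.mpr fun i => ?_
    exact RCLike.ofReal_nonneg.mpr (abs_nonneg _)
  refine ((psd_eq_matAbs_of_sq_eq hS (Matrix.posSemidef_conjTranspose_mul_self X) ?_)).symm
  rw [pow_two, hX.eq, key]
  conv_rhs => rw [hX.spectral_theorem, Unitary.conjStarAlgAut_apply]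
  rw [key]
  congr 2
  rw [hDdef, Matrix.diagonal_mul_diagonal, Matrix.diagonal_mul_diagonal]
  exact congrArg _ (funext fun i => by
    simp only [Function.comp_apply]
    rw [← RCLike.ofReal_mul, ← RCLike.ofReal_mul, abs_mul_abs_self])

lemma matPosPart_psd {n : ℕ} {X : Matrix (Fin n) (Fin n) ℂ} (hX : X.IsHermitian) :
    (matPosPart X).PosSemidef := by
  apply psd_smul_half
  set U := (hX.eigenvectorUnitary : Matrix (Fin n) (Fin n) ℂ) with hUdef
  have hsum : matAbs X + X = U *
      Matrix.diagonal ((RCLike.ofReal : ℝ → ℂ) ∘ fun i => |hX.eigenvalues i| + hX.eigenvalues i) *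
      star U := by
    have hd : Matrix.diagonal ((RCLike.ofReal : ℝ → ℂ) ∘ fun i => |hX.eigenvalues i| + hX.eigenvalues i)
        = Matrix.diagonal ((RCLike.ofReal : ℝ → ℂ) ∘ fun i => |hX.eigenvalues i|)
          + Matrix.diagonal ((RCLike.ofReal : ℝ → ℂ) ∘ hX.eigenvalues) := by
      symm
      rw [Matrix.diagonal_add]
      exact congrArg _ (funext fun i => by simp)
    rw [hd, Matrix.mul_add, Matrix.add_mul, ← matAbs_spectral hX, ← Unitary.conjStarAlgAut_apply (S := ℂ), ← hX.spectral_theorem]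
  rw [hsum]
  refine Matrix.PosSemidef.mul_mul_conjTranspose_same ?_ _
  refine Matrix.posSemidef_diagonal_iff.mpr fun i => ?_
  simp only [Function.comp_apply]
  refine RCLike.ofReal_nonneg.mpr ?_
  have := neg_abs_le (hX.eigenvalues i)
  linarith

lemma posPart_trace_key {n : ℕ} {X : Matrix (Fin n) (Fin n) ℂ} (hX : X.IsHermitian) :
    traceNorm (matPosPart X) + traceNorm (matPosPart (-X)) = traceNorm X := by
  have h1 := matPosPart_psd hX
  have h2 := matPosPart_psd hX.neg
  rw [traceNorm_psd h1, traceNorm_psd h2, ← Complex.add_re, ← Matrix.trace_add]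
  have : matPosPart X + matPosPart (-X) = matAbs X := by
    rw [matPosPart, matPosPart, matAbs_neg]
    module
  rw [this, traceNorm]

lemma traceNorm_zero {n : ℕ} : traceNorm (0 : Matrix (Fin n) (Fin n) ℂ) = 0 := by
  rw [traceNorm_psd Matrix.PosSemidef.zero]
  simp

lemma matPosPart_zero {n : ℕ} : matPosPart (0 : Matrix (Fin n) (Fin n) ℂ) = 0 := by
  rw [matPosPart, matAbs_eq_self Matrix.PosSemidef.zero]
  simp

lemma sum_pairs {r : ℕ} (t u : Fin r → Fin r → ℝ)
    (hdiag : ∀ i, t i i = 0) (hpair : ∀ i j, t i j + t j i = u i j) :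
    ∑ j, ∑ i, t i j =
      ∑ p ∈ Finset.univ.filter (fun p : Fin r × Fin r => p.1 < p.2), u p.1 p.2 := by
  have h0 : (∑ j, ∑ i, t i j) = ∑ p : Fin r × Fin r, t p.1 p.2 := by
    rw [Fintype.sum_prod_type]
    exact Finset.sum_comm
  rw [h0, ← Finset.sum_filter_add_sum_filter_not Finset.univ
    (fun p : Fin r × Fin r => p.1 < p.2) (fun p => t p.1 p.2)]
  have h1 : (Finset.univ.filter (fun p : Fin r × Fin r => ¬ p.1 < p.2)) =
      (Finset.univ.filter (fun p : Fin r × Fin r => p.2 < p.1)) ∪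
      (Finset.univ.filter (fun p : Fin r × Fin r => p.1 = p.2)) := by
    ext p
    simp only [Finset.mem_filter, Finset.mem_univ, true_and, Finset.mem_union]
    rcases lt_trichotomy p.1 p.2 with h | h | h
    · simp [h, not_lt_of_gt h, ne_of_lt h]
    · simp [h, h ▸ lt_irrefl p.1]
    · simp [h, not_lt_of_gt h]
  have hdisj : Disjoint (Finset.univ.filter (fun p : Fin r × Fin r => p.2 < p.1))
      (Finset.univ.filter (fun p : Fin r × Fin r => p.1 = p.2)) := by
    rw [Finset.disjoint_left]
    intro p hp1 hp2
    simp only [Finset.mem_filter, Finset.mem_univ, true_and] at hp1 hp2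
    exact absurd (hp2 ▸ hp1) (lt_irrefl _)
  have h2 : ∑ p ∈ Finset.univ.filter (fun p : Fin r × Fin r => ¬ p.1 < p.2), t p.1 p.2
      = (∑ p ∈ Finset.univ.filter (fun p : Fin r × Fin r => p.2 < p.1), t p.1 p.2) +
        ∑ p ∈ Finset.univ.filter (fun p : Fin r × Fin r => p.1 = p.2), t p.1 p.2 := by
    rw [h1, Finset.sum_union hdisj]
  have h3 : ∑ p ∈ Finset.univ.filter (fun p : Fin r × Fin r => p.1 = p.2), t p.1 p.2 = 0 := by
    refine Finset.sum_eq_zero fun p hp => ?_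
    simp only [Finset.mem_filter] at hp
    rw [hp.2]
    exact hdiag p.2
  have h4 : ∑ p ∈ Finset.univ.filter (fun p : Fin r × Fin r => p.2 < p.1), t p.1 p.2
      = ∑ p ∈ Finset.univ.filter (fun p : Fin r × Fin r => p.1 < p.2), t p.2 p.1 := by
    refine Finset.sum_nbij' Prod.swap Prod.swap ?_ ?_ ?_ ?_ ?_
    · intro p hp; simp only [Finset.mem_filter, Finset.mem_univ, true_and] at hp ⊢; exact hp
    · intro p hp; simp only [Finset.mem_filter, Finset.mem_univ, true_and] at hp ⊢; exact hp
    · intro p _; rfl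
    · intro p _; rfl
    · intro p _; rfl
  rw [h2, h3, h4, add_zero, ← Finset.sum_add_distrib]
  exact Finset.sum_congr rfl fun p _ => hpair p.1 p.2

theorem stmt13 {n r : ℕ} (hr : 2 ≤ r) (ρ : Fin r → Matrix (Fin n) (Fin n) ℂ)
    (q : Fin r → ℝ) (hρ : ∀ i, IsDensity (ρ i)) (hq : ∀ i, 0 < q i)
    (hq1 : ∑ i, q i = 1) :
    Finset.univ.sup' (Finset.univ_nonempty_iff.mpr ⟨⟨0, by omega⟩⟩)
        (fun j => q j + (1 / ((r : ℝ) - 1)) *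
          ∑ i, traceNorm (matPosPart ((q i : ℂ) • ρ i - (q j : ℂ) • ρ j)))
      ≥ (1 / (r : ℝ)) * (1 + (1 / ((r : ℝ) - 1)) *
          ∑ p ∈ Finset.univ.filter (fun p : Fin r × Fin r => p.1 < p.2),
            traceNorm ((q p.1 : ℂ) • ρ p.1 - (q p.2 : ℂ) • ρ p.2)) := by
  have hr0 : (0 : ℝ) < (r : ℝ) := by
    have : 0 < r := by omega
    exact_mod_cast this
  have herm : ∀ i j : Fin r, ((q i : ℂ) • ρ i - (q j : ℂ) • ρ j).IsHermitian := by
    intro i j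
    have h1 := (hρ i).1.1
    have h2 := (hρ j).1.1
    simp [Matrix.IsHermitian, Matrix.conjTranspose_sub, Matrix.conjTranspose_smul,
      h1.eq, h2.eq, Complex.star_def, Complex.conj_ofReal]
  have hpair : ∀ i j : Fin r,
      traceNorm (matPosPart ((q i : ℂ) • ρ i - (q j : ℂ) • ρ j)) +
      traceNorm (matPosPart ((q j : ℂ) • ρ j - (q i : ℂ) • ρ i)) =
      traceNorm ((q i : ℂ) • ρ i - (q j : ℂ) • ρ j) := by
    intro i j
    have h := posPart_trace_key (herm i j)
    rwa [neg_sub] at h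
  have hdiag : ∀ i : Fin r,
      traceNorm (matPosPart ((q i : ℂ) • ρ i - (q i : ℂ) • ρ i)) = 0 := by
    intro i
    rw [sub_self, matPosPart_zero, traceNorm_zero]
  have hsums := sum_pairs
    (fun i j => traceNorm (matPosPart ((q i : ℂ) • ρ i - (q j : ℂ) • ρ j)))
    (fun i j => traceNorm ((q i : ℂ) • ρ i - (q j : ℂ) • ρ j))
    hdiag hpair
  have hsumf : ∑ j : Fin r, (q j + (1 / ((r : ℝ) - 1)) *
        ∑ i, traceNorm (matPosPart ((q i : ℂ) • ρ i - (q j : ℂ) • ρ j)))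
      = 1 + (1 / ((r : ℝ) - 1)) *
        ∑ p ∈ Finset.univ.filter (fun p : Fin r × Fin r => p.1 < p.2),
          traceNorm ((q p.1 : ℂ) • ρ p.1 - (q p.2 : ℂ) • ρ p.2) := by
    rw [Finset.sum_add_distrib, hq1, ← Finset.mul_sum, hsums]
  rw [ge_iff_le]
  set S := Finset.univ.sup' (Finset.univ_nonempty_iff.mpr ⟨⟨0, by omega⟩⟩)
      (fun j => q j + (1 / ((r : ℝ) - 1)) *
        ∑ i, traceNorm (matPosPart ((q i : ℂ) • ρ i - (q j : ℂ) • ρ j))) with hS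
  have hle : ∑ j : Fin r, (q j + (1 / ((r : ℝ) - 1)) *
        ∑ i, traceNorm (matPosPart ((q i : ℂ) • ρ i - (q j : ℂ) • ρ j))) ≤ (r : ℝ) * S := by
    calc ∑ j : Fin r, (q j + (1 / ((r : ℝ) - 1)) *
          ∑ i, traceNorm (matPosPart ((q i : ℂ) • ρ i - (q j : ℂ) • ρ j)))
        ≤ ∑ _j : Fin r, S := by
          refine Finset.sum_le_sum fun j _ => ?_
          rw [hS]
          exact Finset.le_sup' (fun j => q j + (1 / ((r : ℝ) - 1)) *
            ∑ i, traceNorm (matPosPart ((q i : ℂ) • ρ i - (q j : ℂ) • ρ j)))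
            (Finset.mem_univ j)
      _ = (r : ℝ) * S := by
          rw [Finset.sum_const, Finset.card_univ, Fintype.card_fin, nsmul_eq_mul]
  calc (1 / (r : ℝ)) * (1 + (1 / ((r : ℝ) - 1)) *
        ∑ p ∈ Finset.univ.filter (fun p : Fin r × Fin r => p.1 < p.2),
          traceNorm ((q p.1 : ℂ) • ρ p.1 - (q p.2 : ℂ) • ρ p.2))
      = (1 / (r : ℝ)) * ∑ j : Fin r, (q j + (1 / ((r : ℝ) - 1)) *
          ∑ i, traceNorm (matPosPart ((q i : ℂ) • ρ i - (q j : ℂ) • ρ j))) := by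
        rw [hsumf]
    _ ≤ (1 / (r : ℝ)) * ((r : ℝ) * S) := by
        exact mul_le_mul_of_nonneg_left hle (by positivity)
    _ = S := by
        field_simp
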